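/- Let M be an Artinian monomial ideal with staircase S and outer corners α^1 >_σ ... >_σ α^N ordered by the lexicographic order induced by a permutation σ of {1,...,n}. Define inductively S_{σ,α^k} = { x ∈ S \ (S_{σ,α^1} ∪ ... ∪ S_{σ,α^{k-1}}) : x ≤ α^k }. Then the sets S_{σ,α^1},...,S_{σ,α^N} form a partition of S. -/

import Mathlib

open MvPolynomial MeasureTheory

def lcmOf {n r : ℕ} (a : Fin r → Fin n → ℕ) (I : Finset (Fin r)) : Fin n → ℕ :=
  fun j => I.sup fun i => a i j

def Scarf {n r : ℕ} (a : Fin r → Fin n → ℕ) : Set (Finset (Fin r)) :=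
  {I | ∀ J : Finset (Fin r), lcmOf a J = lcmOf a I → J = I}

def StrictlyDivides {n : ℕ} (b c : Fin n → ℕ) : Prop :=
  ∀ ℓ, b ℓ ≤ c ℓ ∧ (0 < c ℓ → b ℓ < c ℓ)

def Generic {n : ℕ} {ι : Type*} (a : ι → Fin n → ℕ) : Prop :=
  ∀ i j, i ≠ j → (∃ ℓ, 0 < a i ℓ ∧ a i ℓ = a j ℓ) →
    ∃ k, StrictlyDivides (a k) (a i ⊔ a j)

def ArtinianGens {n : ℕ} {ι : Type*} (a : ι → Fin n → ℕ) : Prop :=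
  ∀ ℓ : Fin n, ∃ i, ∀ m, m ≠ ℓ → a i m = 0

def MinimalGens {n : ℕ} {ι : Type*} (a : ι → Fin n → ℕ) : Prop :=
  ∀ i j, a i ≤ a j → i = j

def genStaircase {n r : ℕ} (a : Fin r → Fin n → ℕ) : Set (Fin n → ℝ) :=
  {x | (∀ j, 0 < x j) ∧ ∀ i, ∃ j, x j ≤ (a i j : ℝ)}

def outerCorners {n : ℕ} (S : Set (Fin n → ℝ)) : Set (Fin n → ℝ) :=
  {α | α ∈ S ∧ ∀ x ∈ S, α ≤ x → x = α}

def lexGT {n : ℕ} (σ : Equiv.Perm (Fin n)) (α β : Fin n → ℝ) : Prop :=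
  ∃ k, (∀ ℓ < k, α (σ ℓ) = β (σ ℓ)) ∧ β (σ k) < α (σ k)

def piece {n : ℕ} (S : Set (Fin n → ℝ)) (σ : Equiv.Perm (Fin n)) (α : Fin n → ℝ) :
    Set (Fin n → ℝ) :=
  {x | x ∈ S ∧ x ≤ α ∧ ∀ β ∈ outerCorners S, lexGT σ β α → ¬ x ≤ β}

noncomputable def monIdeal {n : ℕ} (B : Set (Fin n → ℕ)) : Ideal (MvPolynomial (Fin n) ℂ) :=
  Ideal.span ((fun b => monomial (Finsupp.equivFunOnFinite.symm b) (1:ℂ)) '' B)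

def IsMonomialIdeal {n : ℕ} (M : Ideal (MvPolynomial (Fin n) ℂ)) : Prop :=
  ∃ B, M = monIdeal B

def staircaseI {n : ℕ} (M : Ideal (MvPolynomial (Fin n) ℂ)) : Set (Fin n → ℝ) :=
  {x | (∀ i, 0 < x i) ∧
    monomial (Finsupp.equivFunOnFinite.symm fun i => ⌈x i⌉₊ - 1) (1:ℂ) ∉ M}

open MvPolynomial

lemma mem_monIdeal_coeff {n : ℕ} {B : Set (Fin n → ℕ)} {p : MvPolynomial (Fin n) ℂ}
    (hp : p ∈ monIdeal B) (d : Fin n →₀ ℕ) (hd : coeff d p ≠ 0) :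
    ∃ b ∈ B, Finsupp.equivFunOnFinite.symm b ≤ d := by
  classical
  induction hp using Submodule.span_induction generalizing d with
  | mem x hx =>
    obtain ⟨b, hb, rfl⟩ := hx
    refine ⟨b, hb, ?_⟩
    rw [coeff_monomial] at hd
    split_ifs at hd with h
    · exact le_of_eq h
    · exact absurd rfl hd
  | zero => simp at hd
  | add x y _ _ ihx ihy =>
    rw [coeff_add] at hd
    rcases (by by_contra h; push_neg at h; simp [h.1, h.2] at hd :
        coeff d x ≠ 0 ∨ coeff d y ≠ 0) with h | h
    · exact ihx d h
    · exact ihy d h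
  | smul r x _ ih =>
    rw [smul_eq_mul, coeff_mul] at hd
    obtain ⟨⟨u, v⟩, huv, hne⟩ := Finset.exists_ne_zero_of_sum_ne_zero hd
    obtain ⟨b, hb, hle⟩ := ih v (right_ne_zero_of_mul hne)
    exact ⟨b, hb, hle.trans (by
      rw [Finset.HasAntidiagonal.mem_antidiagonal] at huv
      exact huv ▸ le_add_self)⟩

lemma monomial_mem_of_le {n : ℕ} {B : Set (Fin n → ℕ)} {b : Fin n → ℕ} (hb : b ∈ B)
    (d : Fin n →₀ ℕ) (hle : Finsupp.equivFunOnFinite.symm b ≤ d) :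
    monomial d (1 : ℂ) ∈ monIdeal B := by
  have : monomial d (1 : ℂ) =
      monomial (d - Finsupp.equivFunOnFinite.symm b) 1 *
        monomial (Finsupp.equivFunOnFinite.symm b) 1 := by
    rw [monomial_mul, one_mul, tsub_add_cancel_of_le hle]
  rw [this]
  exact Ideal.mul_mem_left _ _ (Ideal.subset_span ⟨b, hb, rfl⟩)

lemma staircase_exp_finite {n : ℕ} (M : Ideal (MvPolynomial (Fin n) ℂ))
    (hmon : IsMonomialIdeal M)
    (hart : FiniteDimensional ℂ (MvPolynomial (Fin n) ℂ ⧸ M)) :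
    {d : Fin n → ℕ | monomial (Finsupp.equivFunOnFinite.symm d) (1:ℂ) ∉ M}.Finite := by
  classical
  obtain ⟨B, rfl⟩ := hmon
  set E := {d : Fin n → ℕ | monomial (Finsupp.equivFunOnFinite.symm d) (1:ℂ) ∉ monIdeal B}
  have hli : LinearIndependent ℂ fun d : E =>
      Ideal.Quotient.mk (monIdeal B) (monomial (Finsupp.equivFunOnFinite.symm (d : Fin n → ℕ)) 1) := by
    rw [linearIndependent_iff]
    intro l hl
    ext d
    by_contra hne
    have hmem : (∑ e ∈ l.support, monomial (Finsupp.equivFunOnFinite.symm (e : Fin n → ℕ)) (l e))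
        ∈ monIdeal B := by
      rw [← Ideal.Quotient.eq_zero_iff_mem, map_sum, ← hl, Finsupp.linearCombination_apply,
        Finsupp.sum]
      refine Finset.sum_congr rfl fun e _ => ?_
      have h1 : monomial (Finsupp.equivFunOnFinite.symm (e : Fin n → ℕ)) (l e)
          = l e • monomial (Finsupp.equivFunOnFinite.symm (e : Fin n → ℕ)) (1:ℂ) := by
        rw [smul_monomial, smul_eq_mul, mul_one]
      rw [h1, ← Ideal.Quotient.mkₐ_eq_mk ℂ, _root_.map_smul]
    have hcoeff : coeff (Finsupp.equivFunOnFinite.symm (d : Fin n → ℕ))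
        (∑ e ∈ l.support, monomial (Finsupp.equivFunOnFinite.symm (e : Fin n → ℕ)) (l e)) = l d := by
      rw [coeff_sum]
      rw [Finset.sum_eq_single d]
      · simp [coeff_monomial]
      · intro e _ hed
        rw [coeff_monomial, if_neg]
        intro h
        exact hed (Subtype.ext (Finsupp.equivFunOnFinite.symm.injective h))
      · intro h
        simp [Finsupp.notMem_support_iff.mp h, coeff_monomial]
    obtain ⟨b, hb, hble⟩ := mem_monIdeal_coeff hmem _ (hcoeff ▸ hne)
    exact d.2 (monomial_mem_of_le hb _ hble)
  haveI := hli.finite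
  exact Set.toFinite _

/-- every staircase point lies below an outer corner -/
lemma exists_corner_above {n : ℕ} (M : Ideal (MvPolynomial (Fin n) ℂ))
    (hmon : IsMonomialIdeal M)
    (hart : FiniteDimensional ℂ (MvPolynomial (Fin n) ℂ ⧸ M))
    {x : Fin n → ℝ} (hx : x ∈ staircaseI M) :
    ∃ β ∈ outerCorners (staircaseI M), x ≤ β := by
  classical
  obtain ⟨hpos, hnm⟩ := hx
  set E := {d : Fin n → ℕ | monomial (Finsupp.equivFunOnFinite.symm d) (1:ℂ) ∉ M}
  have hEfin := staircase_exp_finite M hmon hart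
  set dx : Fin n → ℕ := fun i => ⌈x i⌉₊ - 1 with hdx
  have hdxE : dx ∈ E := hnm
  set F := {e ∈ E | dx ≤ e}
  have hFfin : F.Finite := hEfin.subset (Set.sep_subset _ _)
  obtain ⟨e, heF, hmax'⟩ := hFfin.exists_maximal (Set.nonempty_of_mem ⟨hdxE, le_refl _⟩)
  have hmax : ∀ f ∈ F, e ≤ f → e = f := fun f hf h => le_antisymm h (hmax' hf h)
  set y : Fin n → ℝ := fun i => (e i : ℝ) + 1 with hy
  have hceil_y : ∀ i, ⌈y i⌉₊ = e i + 1 := by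
    intro i
    rw [hy]
    exact_mod_cast Nat.ceil_natCast (e i + 1)
  have hyS : y ∈ staircaseI M := by
    constructor
    · intro i; positivity
    · have : (fun i => ⌈y i⌉₊ - 1) = e := by
        funext i; rw [hceil_y i]; omega
      rw [this]; exact heF.1
  have hxy : x ≤ y := by
    intro i
    calc x i ≤ (⌈x i⌉₊ : ℝ) := Nat.le_ceil _
    _ ≤ (dx i + 1 : ℕ) := by
        have h1 : 1 ≤ ⌈x i⌉₊ := Nat.one_le_ceil_iff.mpr (hpos i)
        have h2 : ⌈x i⌉₊ ≤ dx i + 1 := by simp only [hdx]; omega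
        exact_mod_cast h2
    _ ≤ y i := by
        have h := heF.2 i
        have h' : (dx i : ℝ) ≤ e i := by exact_mod_cast h
        rw [hy]
        push_cast
        linarith
  refine ⟨y, ⟨hyS, ?_⟩, hxy⟩
  intro z hz hyz
  obtain ⟨hzpos, hznm⟩ := hz
  set f : Fin n → ℕ := fun i => ⌈z i⌉₊ - 1 with hf
  have hceil_z : ∀ i, e i + 1 ≤ ⌈z i⌉₊ := by
    intro i
    have hy2 : (e i : ℝ) + 1 ≤ z i := hyz i
    have : ((e i + 1 : ℕ) : ℝ) ≤ z i := by push_cast; linarith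
    calc e i + 1 = ⌈((e i + 1 : ℕ) : ℝ)⌉₊ := (Nat.ceil_natCast _).symm
    _ ≤ ⌈z i⌉₊ := Nat.ceil_mono this
  have hfF : f ∈ F := by
    refine ⟨hznm, fun i => ?_⟩
    have h1 := heF.2 i
    have h2 := hceil_z i
    have h3 : f i = ⌈z i⌉₊ - 1 := rfl
    exact le_trans h1 (le_trans (Nat.le_sub_one_of_lt h2) h3.ge)
  have hef : e ≤ f := fun i => by
    have h2 := hceil_z i
    have h3 : f i = ⌈z i⌉₊ - 1 := rfl
    exact le_trans (Nat.le_sub_one_of_lt h2) h3.ge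
  have : e = f := hmax f hfF hef
  have hzle : z ≤ y := by
    intro i
    have h1 : f i = e i := by rw [this]
    have h2 := hceil_z i
    have h0 : f i = ⌈z i⌉₊ - 1 := rfl
    have h3 : ⌈z i⌉₊ = e i + 1 := by omega
    calc z i ≤ (⌈z i⌉₊ : ℝ) := Nat.le_ceil _
    _ = y i := by rw [h3, hy]; push_cast; ring
  exact le_antisymm hzle hyz
/-- ordering the outer corners `α^1 >_σ … >_σ α^N` of the staircase
of an Artinian monomial ideal by the σ-lexicographic order, the inductively
defined sets `S_{σ,α^k} = {x ∈ S \ (S_{σ,α^1} ∪ … ∪ S_{σ,α^{k-1}}) : x ≤ α^k}`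
form a partition of `S`. -/
theorem stmt5 {n N : ℕ} (M : Ideal (MvPolynomial (Fin n) ℂ))
    (hmon : IsMonomialIdeal M)
    (hart : FiniteDimensional ℂ (MvPolynomial (Fin n) ℂ ⧸ M))
    (σ : Equiv.Perm (Fin n)) (α : Fin N → (Fin n → ℝ))
    (henum : ∀ β, β ∈ outerCorners (staircaseI M) ↔ ∃ k, α k = β)
    (hord : ∀ j k : Fin N, j < k → lexGT σ (α j) (α k))
    (T : Fin N → Set (Fin n → ℝ))
    (hT : ∀ k, T k =
      {x | x ∈ staircaseI M ∧ (∀ j < k, x ∉ T j) ∧ x ≤ α k}) :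
    (∀ j k : Fin N, j ≠ k → Disjoint (T j) (T k)) ∧
      (⋃ k, T k) = staircaseI M := by
  classical
  have hTmem : ∀ k x, x ∈ T k → x ∈ staircaseI M ∧ (∀ j < k, x ∉ T j) ∧ x ≤ α k := by
    intro k x hx; rw [hT k] at hx; exact hx
  constructor
  · intro j k hjk
    rcases hjk.lt_or_gt with h | h
    · rw [Set.disjoint_right]
      intro x hxk
      exact (hTmem k x hxk).2.1 j h
    · rw [Set.disjoint_left]
      intro x hxj
      exact fun hxk => (hTmem j x hxj).2.1 k h hxk
  · apply Set.eq_of_subset_of_subset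
    · exact Set.iUnion_subset fun k x hx => (hTmem k x hx).1
    · intro x hx
      obtain ⟨β, hβ, hxβ⟩ := exists_corner_above M hmon hart hx
      obtain ⟨k₀, rfl⟩ := (henum β).mp hβ
      have hne : {k : Fin N | x ≤ α k}.Nonempty := ⟨k₀, hxβ⟩
      obtain ⟨k, hk, hkmin⟩ := Set.exists_min_image _ id (Set.toFinite _) hne
      refine Set.mem_iUnion.mpr ⟨k, ?_⟩
      rw [hT k]
      refine ⟨hx, fun j hj hxj => ?_, hk⟩
      exact absurd (hkmin j (hTmem j x hxj).2.2) (by simpa using hj.not_ge)
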